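/- For every positive integer n, the number of integer triangles with perimeter p = 12n + 2 is T(12n+2) = 3n² + n. -/

import Mathlib

open Finset

lemma sum_aux (n : ℕ) : ∑ j ∈ Finset.range (2*n), ((j+1) + (j+1)/2) = 3*n^2 + n := by
  induction n with
  | zero => simp
  | succ n ih =>
    have h : 2*(n+1) = (2*n)+1+1 := by ring
    rw [h, Finset.sum_range_succ, Finset.sum_range_succ, ih]
    have h1 : (2*n+1)/2 = n := by omega
    have h2 : (2*n+1+1)/2 = n+1 := by omega
    rw [h1, h2]
    ring

/-- `T p` is the number of integer triangles with perimeter `p`: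
unordered triples of positive integers `a ≤ b ≤ c` with `a + b + c = p`
and `c < a + b`. -/
noncomputable def T (p : ℕ) : ℕ :=
  Nat.card {t : ℕ × ℕ × ℕ //
    0 < t.1 ∧ t.1 ≤ t.2.1 ∧ t.2.1 ≤ t.2.2 ∧ t.2.2 < t.1 + t.2.1 ∧ t.1 + t.2.1 + t.2.2 = p}

theorem integer_triangles_perimeter_12n_plus_2 (n : ℕ) (hn : 0 < n) :
    T (12 * n + 2) = 3 * n ^ 2 + n := by
  set p := 12 * n + 2 with hp
  set F : Finset (ℕ × ℕ × ℕ) :=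
    (Finset.range (p+1) ×ˢ Finset.range (p+1) ×ˢ Finset.range (p+1)).filter
      (fun t => 0 < t.1 ∧ t.1 ≤ t.2.1 ∧ t.2.1 ≤ t.2.2 ∧ t.2.2 < t.1 + t.2.1 ∧
        t.1 + t.2.1 + t.2.2 = p) with hF
  have hTF : T p = F.card := by
    rw [T, ← Nat.card_eq_finsetCard]
    refine Nat.card_congr (Equiv.subtypeEquivRight fun t => ?_)
    simp only [hF, Finset.mem_filter, Finset.mem_product, Finset.mem_range]
    constructor
    · intro h; exact ⟨⟨by omega, by omega, by omega⟩, h⟩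
    · intro h; exact h.2
  -- sigma set
  set G : Finset ((_ : ℕ) × ℕ) :=
    (Finset.Icc (4*n+1) (6*n)).sigma (fun c => Finset.Icc ((12*n+3-c)/2) c) with hG
  have hFG : F.card = G.card := by
    refine Finset.card_nbij' (fun t => ⟨t.2.2, t.2.1⟩)
      (fun s => (p - s.1 - s.2, s.2, s.1)) ?_ ?_ ?_ ?_
    · intro t ht
      simp only [hF, Finset.mem_coe, Finset.mem_filter] at ht
      obtain ⟨-, h1, h2, h3, h4, h5⟩ := ht
      simp only [hG, Finset.mem_coe, Finset.mem_sigma, Finset.mem_Icc]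
      omega
    · intro s hs
      simp only [hG, Finset.mem_coe, Finset.mem_sigma, Finset.mem_Icc] at hs
      simp only [hF, Finset.mem_coe, Finset.mem_filter, Finset.mem_product, Finset.mem_range]
      refine ⟨⟨by omega, by omega, by omega⟩, by omega, by omega, by omega, by omega, by omega⟩
    · intro t ht
      simp only [hF, Finset.mem_coe, Finset.mem_filter] at ht
      obtain ⟨-, h1, h2, h3, h4, h5⟩ := ht
      simp only
      obtain ⟨a, b, c⟩ := t
      simp_all
      omega
    · intro s hs
      simp only [hG, Finset.mem_coe, Finset.mem_sigma, Finset.mem_Icc] at hs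
      rfl
  have hGcard : G.card = ∑ c ∈ Finset.Icc (4*n+1) (6*n), (c + 1 - (12*n+3-c)/2) := by
    rw [hG, Finset.card_sigma]
    exact Finset.sum_congr rfl fun c _ => Nat.card_Icc _ _
  rw [hTF, hFG, hGcard]
  have hIcc : Finset.Icc (4*n+1) (6*n) = Finset.Ico (4*n+1) (6*n+1) := by
    rw [Finset.Ico_add_one_right_eq_Icc]
  rw [hIcc, Finset.sum_Ico_eq_sum_range]
  have hrange : 6*n+1 - (4*n+1) = 2*n := by omega
  rw [hrange]
  have hterm : ∀ j ∈ Finset.range (2*n),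
      (4*n+1+j + 1 - (12*n+3-(4*n+1+j))/2) = (j+1) + (j+1)/2 := by
    intro j hj
    simp only [Finset.mem_range] at hj
    omega
  rw [Finset.sum_congr rfl hterm, sum_aux]
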